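/- Let E = ℓ^p and Φ(ζ)(x) = (x_n ζ^{n+1}/n^{n+1}). Define entire functions e_n: ℂ → E by e_n(ζ) = (0,…,0, ζ^n/n, 0,…) (nonzero only in slot n), and suppose g_n: ℂ → E are entire functions such that g_n − e_n = Φ h_n for some entire h_n: ℂ → E. Then for every r > 1, max_{|ζ|=r} ‖g_n(ζ)‖ ≥ r^n/n; in particular the sequence g_n does not tend to 0 uniformly on the circle |ζ| = r. -/

import Mathlib

open Metric

lemma max_mod_aux {u : ℂ → ℂ} (hu : Differentiable ℂ u) {r : ℝ} (hr : 0 < r) :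
    ∃ z : ℂ, ‖z‖ = r ∧ ‖u 0‖ ≤ ‖u z‖ := by
  obtain ⟨z, hz, hmax⟩ := Complex.exists_mem_frontier_isMaxOn_norm
    (Metric.isBounded_ball (x := (0:ℂ)) (r := r)) (Metric.nonempty_ball.mpr hr)
    hu.diffContOnCl
  rw [frontier_ball _ hr.ne'] at hz
  refine ⟨z, mem_sphere_zero_iff_norm.mp hz, hmax ?_⟩
  rw [closure_ball _ hr.ne']
  exact mem_closedBall_self hr.le

/-- Let `E = ℓ^p` and `Φ(ζ)(x) = (x_n ζ^{n+1}/n^{n+1})`.  Let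
`e_n(ζ) = (0,…,ζ^n/n,0,…)` (nonzero only in slot `n`), and suppose
`g_n : ℂ → E` are entire with `g_n − e_n = Φ h_n` for entire `h_n`.  Then for
every `r > 1` and every `n`, `max_{|ζ|=r} ‖g_n(ζ)‖ ≥ r^n/n`; in particular the
sequence `g_n` does not tend to `0` uniformly on the circle `|ζ| = r`. -/
theorem lower_bound_for_lifts (p : ENNReal) [Fact (1 ≤ p)]
    (Φ : ℂ → (lp (fun _ : ℕ+ => ℂ) p →L[ℂ] lp (fun _ : ℕ+ => ℂ) p))
    (hΦ : ∀ (ζ : ℂ) (x : lp (fun _ : ℕ+ => ℂ) p) (n : ℕ+),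
      (Φ ζ x : ∀ _ : ℕ+, ℂ) n = (x : ∀ _ : ℕ+, ℂ) n * ζ ^ ((n : ℕ) + 1) / (n : ℂ) ^ ((n : ℕ) + 1))
    (g : ℕ+ → ℂ → lp (fun _ : ℕ+ => ℂ) p)
    (hg : ∀ n, Differentiable ℂ (g n))
    (hlift : ∀ n : ℕ+, ∃ h : ℂ → lp (fun _ : ℕ+ => ℂ) p, Differentiable ℂ h ∧
      ∀ ζ : ℂ, g n ζ - lp.single p n (ζ ^ (n : ℕ) / (n : ℂ)) = Φ ζ (h ζ)) :
    ∀ r : ℝ, 1 < r →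
      (∀ n : ℕ+, ∃ ζ : ℂ, ‖ζ‖ = r ∧ r ^ (n : ℕ) / (n : ℝ) ≤ ‖g n ζ‖) ∧
      ¬ TendstoUniformlyOn (fun (n : ℕ+) (ζ : ℂ) => g n ζ) 0 Filter.atTop
          (sphere (0 : ℂ) r) := by
  have hp0 : p ≠ 0 := by
    intro h
    have h1 : (1 : ENNReal) ≤ p := Fact.out
    rw [h] at h1
    exact absurd h1 (by simp)
  intro r hr
  have hr0 : (0 : ℝ) < r := lt_trans one_pos hr
  -- coordinate evaluation CLM
  have key : ∀ n : ℕ+, ∃ ζ : ℂ, ‖ζ‖ = r ∧ r ^ (n : ℕ) / (n : ℝ) ≤ ‖g n ζ‖ := by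
    intro n
    set ev : lp (fun _ : ℕ+ => ℂ) p →L[ℂ] ℂ :=
      LinearMap.mkContinuous
        { toFun := fun f => (f : ∀ _ : ℕ+, ℂ) n
          map_add' := fun f g => rfl
          map_smul' := fun c f => rfl } 1
        (fun f => by rw [one_mul]; exact lp.norm_apply_le_norm hp0 f n) with hev
    have hev_apply : ∀ f : lp (fun _ : ℕ+ => ℂ) p, ev f = (f : ∀ _ : ℕ+, ℂ) n :=
      fun f => rfl
    obtain ⟨h, hhd, hh⟩ := hlift n
    have hn0 : ((n : ℕ) : ℂ) ≠ 0 := by exact_mod_cast n.ne_zero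
    have hnC : ((n : ℂ)) ≠ 0 := by exact_mod_cast hn0
    set c : ℂ → ℂ := fun ζ => ev (h ζ) / (n : ℂ) ^ ((n : ℕ) + 1) with hc
    set u : ℂ → ℂ := fun ζ => 1 / (n : ℂ) + ζ * c ζ with hu
    have hud : Differentiable ℂ u := by
      apply Differentiable.add (differentiable_const _)
      exact differentiable_id.mul ((ev.differentiable.comp hhd).div_const _)
    have hkey : ∀ ζ : ℂ, ev (g n ζ) = ζ ^ (n : ℕ) * u ζ := by
      intro ζ
      have h1 := congrArg (fun f : lp (fun _ : ℕ+ => ℂ) p => (f : ∀ _ : ℕ+, ℂ) n) (hh ζ)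
      simp only [lp.coeFn_sub, Pi.sub_apply] at h1
      rw [hΦ ζ (h ζ) n, lp.single_apply_self] at h1
      have h2 : (g n ζ : ∀ _ : ℕ+, ℂ) n
          = ζ ^ (n : ℕ) / (n : ℂ) + (h ζ : ∀ _ : ℕ+, ℂ) n * ζ ^ ((n : ℕ) + 1) / (n : ℂ) ^ ((n : ℕ) + 1) := by
        linear_combination h1
      simp only [hev_apply, h2, hu, hc]
      field_simp
      ring
    obtain ⟨z, hzr, hz⟩ := max_mod_aux hud hr0
    refine ⟨z, hzr, ?_⟩
    have hu0 : ‖u 0‖ = 1 / (n : ℝ) := by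
      simp [hu, hc]
    have h3 : ‖ev (g n z)‖ = r ^ (n : ℕ) * ‖u z‖ := by
      rw [hkey, norm_mul, norm_pow, hzr]
    have h4 : r ^ (n : ℕ) / (n : ℝ) ≤ ‖ev (g n z)‖ := by
      rw [h3, div_eq_mul_one_div]
      refine mul_le_mul_of_nonneg_left ?_ (pow_nonneg hr0.le _)
      rw [← hu0]; exact hz
    refine h4.trans ?_
    rw [hev_apply]
    exact lp.norm_apply_le_norm hp0 (g n z) n
  refine ⟨key, ?_⟩
  intro H
  have hε : (0 : ℝ) < r - 1 := by linarith
  obtain ⟨n, hn⟩ := (Metric.tendstoUniformlyOn_iff.mp H (r - 1) hε).exists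
  obtain ⟨ζ, hζr, hζ⟩ := key n
  have hmem : ζ ∈ sphere (0 : ℂ) r := mem_sphere_zero_iff_norm.mpr hζr
  have hd := hn ζ hmem
  rw [Pi.zero_apply, dist_zero_left] at hd
  -- Bernoulli: 1 + n(r-1) ≤ r^n
  have hb : 1 + (n : ℕ) * (r - 1) ≤ r ^ (n : ℕ) := by
    have := one_add_mul_le_pow (a := r - 1) (by linarith) (n : ℕ)
    simpa using this
  have hnpos : (0 : ℝ) < (n : ℕ) := by exact_mod_cast n.pos
  have : r - 1 < r ^ (n : ℕ) / (n : ℝ) := by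
    rw [lt_div_iff₀ hnpos]
    nlinarith
  linarith
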